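/- arXiv:2501.15323 — 2 statements merged into one kernel-verified Lean document; each statement's English description precedes it below -/
import Mathlib

section
/- Let a, b ≥ 0 be real numbers whose greatest common divisor is less than δ (where gcd(a,b) is the largest real c with a/c, b/c ∈ ℕ, set to 0 if no such c exists). Then for any ω > δ and any x ∈ [0, ω), there exist natural numbers n, m such that the distance from na + mb to x modulo ω is less than δ. Moreover, n and m can be chosen arbitrarily large. -/
/-- Floor lemma: multiples of a small positive `c` hit within `c` of any `y` modulo `ω`. -/
lemma floor_approx (c ω y : ℝ) (hc : 0 < c) (hω : 0 < ω) :
    ∃ (t : ℕ) (k : ℤ), |(t : ℝ) * c - y - k * ω| < c := by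
  set k : ℤ := ⌈(-y) / ω⌉ with hk
  have hz : 0 ≤ y + k * ω := by
    have := Int.le_ceil ((-y) / ω)
    have h2 : (-y) / ω * ω ≤ (k : ℝ) * ω :=
      mul_le_mul_of_nonneg_right this (le_of_lt hω)
    rw [div_mul_cancel₀ _ (ne_of_gt hω)] at h2
    linarith
  set z : ℝ := y + k * ω with hzdef
  have hzc : 0 ≤ z / c := div_nonneg hz (le_of_lt hc)
  refine ⟨⌊z / c⌋.toNat, k, ?_⟩
  have hfl : (0 : ℤ) ≤ ⌊z / c⌋ := Int.floor_nonneg.mpr hzc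
  have htc : ((⌊z / c⌋.toNat : ℕ) : ℝ) = (⌊z / c⌋ : ℝ) := by
    exact_mod_cast Int.toNat_of_nonneg hfl
  have h1 : (⌊z / c⌋ : ℝ) * c ≤ z := by
    have := Int.floor_le (z / c)
    calc (⌊z / c⌋ : ℝ) * c ≤ z / c * c := mul_le_mul_of_nonneg_right this (le_of_lt hc)
    _ = z := div_mul_cancel₀ _ (ne_of_gt hc)
  have h2 : z < ((⌊z / c⌋ : ℝ) + 1) * c := by
    have := Int.lt_floor_add_one (z / c)
    have h3 : z / c * c < ((⌊z / c⌋ : ℝ) + 1) * c := mul_lt_mul_of_pos_right this hc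
    rwa [div_mul_cancel₀ _ (ne_of_gt hc)] at h3
  rw [htc, abs_lt]
  constructor <;> nlinarith

/-- For an irrational `α` and `0 < ε < 1`, some natural multiple of `α` is within
`(0, ε)` of an integer from above. -/
lemma irr_small (α : ℝ) (hα : Irrational α) (ε : ℝ) (hε : 0 < ε) (hε1 : ε < 1) :
    ∃ (r : ℕ) (j : ℤ), 0 < (r : ℝ) * α - j ∧ (r : ℝ) * α - j < ε := by
  obtain ⟨n, hn⟩ := exists_nat_gt (1 / ε)
  have hnpos : 0 < n := by
    rcases Nat.eq_zero_or_pos n with h | h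
    · exfalso; rw [h] at hn; push_cast at hn
      have : 0 < 1 / ε := one_div_pos.mpr hε
      linarith
    · exact h
  obtain ⟨j, k, hk0, hkn, hjk⟩ := Real.exists_int_int_abs_mul_sub_le α hnpos
  have hlt : |(k : ℝ) * α - j| < ε := by
    have h0 : (1 : ℝ) < (n : ℝ) * ε := by
      rw [div_lt_iff₀ hε] at hn; linarith
    have h1 : (1 : ℝ) / (n + 1) < ε := by
      rw [div_lt_iff₀ (by positivity)]
      nlinarith
    exact lt_of_le_of_lt hjk h1
  have hirr : Irrational ((k : ℝ) * α - j) := by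
    have h1 : Irrational ((k : ℝ) * α) := by
      have := Irrational.intCast_mul hα (ne_of_gt hk0)
      simpa [mul_comm] using this
    simpa using Irrational.sub_intCast h1 j
  have hne : (k : ℝ) * α - j ≠ 0 := hirr.ne_zero
  have hkc : ((k.toNat : ℕ) : ℝ) = (k : ℝ) := by
    exact_mod_cast Int.toNat_of_nonneg (le_of_lt hk0)
  rcases lt_or_gt_of_ne hne with hneg | hpos
  · -- negative case: step the residue around the circle
    set γ : ℝ := -((k : ℝ) * α - j) with hγdef
    have hγ0 : 0 < γ := by simp only [hγdef]; linarith
    have hγε : γ < ε := by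
      rw [abs_lt] at hlt
      simp only [hγdef]; linarith [hlt.1]
    have hS : ∃ t : ℕ, 1 - ε < (t : ℝ) * γ := by
      obtain ⟨t, ht⟩ := exists_nat_gt ((1 - ε) / γ)
      exact ⟨t, by rw [div_lt_iff₀ hγ0] at ht; linarith⟩
    classical
    set t := Nat.find hS with htdef
    have htspec : 1 - ε < (t : ℝ) * γ := Nat.find_spec hS
    have ht1 : 1 ≤ t := by
      rcases Nat.eq_zero_or_pos t with h | h
      · exfalso; rw [h] at htspec; push_cast at htspec; linarith
      · exact h
    have hprev : ¬(1 - ε < ((t - 1 : ℕ) : ℝ) * γ) := Nat.find_min hS (by omega)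
    push_neg at hprev
    have hcast : ((t - 1 : ℕ) : ℝ) = (t : ℝ) - 1 := by
      have h : ((t - 1 : ℕ) : ℤ) = (t : ℤ) - 1 := by omega
      exact_mod_cast h
    rw [hcast] at hprev
    have htγ1 : (t : ℝ) * γ < 1 := by nlinarith
    refine ⟨t * k.toNat, t * j - 1, ?_, ?_⟩
    · push_cast [hkc]
      have h : (t : ℝ) * (k : ℝ) * α - ((t : ℝ) * j - 1) = 1 - (t : ℝ) * γ := by
        rw [hγdef]; ring
      rw [h]; linarith
    · push_cast [hkc]
      have h : (t : ℝ) * (k : ℝ) * α - ((t : ℝ) * j - 1) = 1 - (t : ℝ) * γ := by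
        rw [hγdef]; ring
      rw [h]; linarith
  · refine ⟨k.toNat, j, ?_, ?_⟩ <;> rw [hkc]
    · linarith
    · rw [abs_lt] at hlt; linarith [hlt.2]

/-- Rationality extraction. -/
lemma rat_rep (a ω : ℝ) (ha : 0 ≤ a) (hω : 0 < ω) (h : ¬ Irrational (a / ω)) :
    ∃ (A B : ℕ), 0 < B ∧ a * B = A * ω := by
  rw [Irrational] at h
  push_neg at h
  obtain ⟨q, hq⟩ := h
  have hq0 : 0 ≤ (q : ℝ) := by rw [hq]; positivity
  refine ⟨q.num.toNat, q.den, q.pos, ?_⟩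
  have haq : a = (q : ℝ) * ω := by
    field_simp [ne_of_gt hω] at hq
    linarith [hq]
  have hnum : ((q.num.toNat : ℕ) : ℝ) = ((q.num : ℤ) : ℝ) := by
    have h0 : 0 ≤ q.num := Rat.num_nonneg.mpr (by exact_mod_cast hq0)
    exact_mod_cast Int.toNat_of_nonneg h0
  have hden : (q : ℝ) * q.den = q.num := by
    rw [Rat.cast_def]; field_simp
  rw [haq, hnum]
  nlinarith [hden]

/-- Bezout with natural coefficients modulo `L`. -/
lemma bezout_nat (u v L : ℕ) (hL : 0 < L) :
    ∃ (r s : ℕ) (j : ℤ),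
      (r : ℤ) * u + (s : ℤ) * v = (Nat.gcd (Nat.gcd u v) L : ℤ) + j * L := by
  have hg : ((Nat.gcd u v : ℕ) : ℤ) = (u : ℤ) * Int.gcdA u v + (v : ℤ) * Int.gcdB u v := by
    have := Int.gcd_eq_gcd_ab (u : ℤ) (v : ℤ)
    rwa [Int.gcd_natCast_natCast] at this
  have hdz : ((Nat.gcd (Nat.gcd u v) L : ℕ) : ℤ)
      = ((Nat.gcd u v : ℕ) : ℤ) * Int.gcdA (Nat.gcd u v) L
        + (L : ℤ) * Int.gcdB (Nat.gcd u v) L := by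
    have := Int.gcd_eq_gcd_ab ((Nat.gcd u v : ℕ) : ℤ) (L : ℤ)
    rwa [Int.gcd_natCast_natCast] at this
  obtain ⟨r', s', w, hbez⟩ : ∃ r' s' w : ℤ,
      ((Nat.gcd (Nat.gcd u v) L : ℕ) : ℤ) = (u : ℤ) * r' + (v : ℤ) * s' + (L : ℤ) * w :=
    ⟨Int.gcdA u v * Int.gcdA (Nat.gcd u v) L, Int.gcdB u v * Int.gcdA (Nat.gcd u v) L,
      Int.gcdB (Nat.gcd u v) L, by rw [hdz, hg]; ring⟩
  clear hg hdz
  set M : ℕ := r'.natAbs + s'.natAbs with hM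
  have hL1 : (1 : ℤ) ≤ L := by exact_mod_cast hL
  have hML : (M : ℤ) ≤ (M : ℤ) * L := le_mul_of_one_le_right (Int.natCast_nonneg M) hL1
  have hr0 : 0 ≤ r' + (M : ℤ) * L := by
    have h1 : -(r'.natAbs : ℤ) ≤ r' := by omega
    have h2 : (r'.natAbs : ℤ) ≤ (M : ℤ) := by exact_mod_cast Nat.le_add_right _ _
    linarith
  have hs0 : 0 ≤ s' + (M : ℤ) * L := by
    have h1 : -(s'.natAbs : ℤ) ≤ s' := by omega
    have h2 : (s'.natAbs : ℤ) ≤ (M : ℤ) := by exact_mod_cast Nat.le_add_left _ _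
    linarith
  refine ⟨(r' + M * L).toNat, (s' + M * L).toNat, (M : ℤ) * (u + v) - w, ?_⟩
  rw [Int.toNat_of_nonneg hr0, Int.toNat_of_nonneg hs0, hbez]
  ring

/-- Key lemma B: there is a nonnegative combination `r*a + s*b` within `(0, δ)` of
an integer multiple of `ω`. -/
lemma lemB (a b δ ω : ℝ) (ha : 0 ≤ a) (hb : 0 ≤ b) (hδ : 0 < δ)
    (hgcd : ∀ c : ℝ, 0 < c → (∃ n : ℕ, a = n * c) → (∃ m : ℕ, b = m * c) → c < δ)
    (hδω : δ < ω) :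
    ∃ (r s : ℕ) (j : ℤ), 0 < (r : ℝ) * a + s * b - j * ω ∧
      (r : ℝ) * a + s * b - j * ω < δ := by
  have hω : 0 < ω := lt_trans hδ hδω
  have hε : 0 < δ / ω := by positivity
  have hε1 : δ / ω < 1 := (div_lt_one hω).mpr hδω
  by_cases hia : Irrational (a / ω)
  · obtain ⟨r, j, h1, h2⟩ := irr_small (a / ω) hia (δ / ω) hε hε1
    have key : (r : ℝ) * a + (0 : ℕ) * b - j * ω = ((r : ℝ) * (a / ω) - j) * ω := by
      push_cast; field_simp; ring
    refine ⟨r, 0, j, ?_, ?_⟩ <;> rw [key]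
    · exact mul_pos h1 hω
    · have := mul_lt_mul_of_pos_right h2 hω
      rwa [div_mul_cancel₀ _ (ne_of_gt hω)] at this
  by_cases hib : Irrational (b / ω)
  · obtain ⟨s, j, h1, h2⟩ := irr_small (b / ω) hib (δ / ω) hε hε1
    have key : ((0:ℕ) : ℝ) * a + (s : ℝ) * b - j * ω = ((s : ℝ) * (b / ω) - j) * ω := by
      push_cast; field_simp; ring
    refine ⟨0, s, j, ?_, ?_⟩ <;> rw [key]
    · exact mul_pos h1 hω
    · have := mul_lt_mul_of_pos_right h2 hω
      rwa [div_mul_cancel₀ _ (ne_of_gt hω)] at this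
  -- both rational
  obtain ⟨A, B, hB, hAB⟩ := rat_rep a ω ha hω hia
  obtain ⟨C, D, hD, hCD⟩ := rat_rep b ω hb hω hib
  set L := Nat.lcm B D with hLdef
  have hL : 0 < L := Nat.lcm_pos hB hD
  have hL0 : (L : ℝ) ≠ 0 := by positivity
  set u := A * (L / B) with hudef
  set v := C * (L / D) with hvdef
  have hBL : B ∣ L := Nat.dvd_lcm_left B D
  have hDL : D ∣ L := Nat.dvd_lcm_right B D
  have hau : a * L = u * ω := by
    have h1 : (B * (L / B) : ℕ) = L := Nat.mul_div_cancel' hBL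
    have h1' : (B : ℝ) * ((L / B : ℕ) : ℝ) = (L : ℝ) := by exact_mod_cast h1
    have h2 : ((u : ℕ) : ℝ) = (A : ℝ) * ((L / B : ℕ) : ℝ) := by
      rw [hudef]; push_cast; ring
    rw [h2, ← h1']
    linear_combination ((L / B : ℕ) : ℝ) * hAB
  have hbv : b * L = v * ω := by
    have h1 : (D * (L / D) : ℕ) = L := Nat.mul_div_cancel' hDL
    have h1' : (D : ℝ) * ((L / D : ℕ) : ℝ) = (L : ℝ) := by exact_mod_cast h1
    have h2 : ((v : ℕ) : ℝ) = (C : ℝ) * ((L / D : ℕ) : ℝ) := by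
      rw [hvdef]; push_cast; ring
    rw [h2, ← h1']
    linear_combination ((L / D : ℕ) : ℝ) * hCD
  set g := Nat.gcd u v with hgdef
  set d := Nat.gcd g L with hddef
  have hd : 0 < d := Nat.gcd_pos_of_pos_right g hL
  set c : ℝ := (d : ℝ) * ω / L with hcdef
  have hc : 0 < c := by positivity
  have hdu : d ∣ u := dvd_trans (Nat.gcd_dvd_left g L) (Nat.gcd_dvd_left u v)
  have hdv : d ∣ v := dvd_trans (Nat.gcd_dvd_left g L) (Nat.gcd_dvd_right u v)
  have hcδ : c < δ := by
    apply hgcd c hc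
    · refine ⟨u / d, ?_⟩
      have h1 : ((u / d : ℕ) : ℝ) * (d : ℝ) = (u : ℝ) := by
        exact_mod_cast Nat.div_mul_cancel hdu
      rw [hcdef, mul_div_assoc', eq_comm, div_eq_iff hL0]
      linear_combination ω * h1 - hau
    · refine ⟨v / d, ?_⟩
      have h1 : ((v / d : ℕ) : ℝ) * (d : ℝ) = (v : ℝ) := by
        exact_mod_cast Nat.div_mul_cancel hdv
      rw [hcdef, mul_div_assoc', eq_comm, div_eq_iff hL0]
      linear_combination ω * h1 - hbv
  obtain ⟨r, s, j, hrsj⟩ := bezout_nat u v L hL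
  rw [← hgdef, ← hddef] at hrsj
  have hzr : (r : ℝ) * u + (s : ℝ) * v = (d : ℝ) + (j : ℝ) * L := by
    exact_mod_cast hrsj
  have heq : (r : ℝ) * a + s * b - j * ω = c := by
    rw [hcdef, eq_div_iff hL0]
    linear_combination (r : ℝ) * hau + (s : ℝ) * hbv + ω * hzr
  exact ⟨r, s, j, by rw [heq]; exact hc, by rw [heq]; exact hcδ⟩

/-- Lemma (gcd-dense): if every common "real divisor" `c` of `a` and `b`
(i.e. `a/c, b/c ∈ ℕ`) satisfies `c < δ` (so "gcd(a,b) < δ"), then for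
any `ω > δ` and `x ∈ [0, ω)` there are arbitrarily large `n, m ∈ ℕ`
with `n*a + m*b` within `δ` of `x` modulo `ω`. -/
theorem gcd_dense (a b δ : ℝ) (ha : 0 ≤ a) (hb : 0 ≤ b) (hδ : 0 < δ)
    (hgcd : ∀ c : ℝ, 0 < c → (∃ n : ℕ, a = n * c) → (∃ m : ℕ, b = m * c) → c < δ) :
    ∀ ω : ℝ, δ < ω → ∀ x ∈ Set.Ico (0 : ℝ) ω, ∀ N : ℕ,
      ∃ n m : ℕ, N ≤ n ∧ N ≤ m ∧ ∃ k : ℤ, |n * a + m * b - x - k * ω| < δ := by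
  intro ω hδω x _hx N
  have hω : 0 < ω := lt_trans hδ hδω
  obtain ⟨r, s, j, hc0, hcδ⟩ := lemB a b δ ω ha hb hδ hgcd hδω
  set c : ℝ := (r : ℝ) * a + s * b - j * ω with hcdef
  obtain ⟨t, k, ht⟩ := floor_approx c ω (x - N * a - N * b) hc0 hω
  refine ⟨N + t * r, N + t * s, Nat.le_add_right _ _, Nat.le_add_right _ _, k + t * j, ?_⟩
  have heq : ((N + t * r : ℕ) : ℝ) * a + ((N + t * s : ℕ) : ℝ) * b - x
      - ((k + t * j : ℤ) : ℝ) * ω = (t : ℝ) * c - (x - N * a - N * b) - k * ω := by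
    rw [hcdef]; push_cast; ring
  rw [heq]
  exact lt_trans ht hcδ
end

section
/- Let X be a shift space with a synchronizing word v. For any word w such that vwv belongs to the language of X, the bi-infinite periodic sequence obtained by repeating vw is an element of X. -/
/-- The language of a shift space `X ⊆ A^ℤ`: finite words appearing in points of `X`. -/
def shiftLanguage {A : Type*} (X : Set (ℤ → A)) : Set (List A) :=
  {w | ∃ x ∈ X, ∃ i : ℤ, ∀ j : Fin w.length, x (i + j) = w.get j}

/-- A word `v` is synchronizing: `uv ∈ 𝓛` and `vw ∈ 𝓛` imply `uvw ∈ 𝓛`. -/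
def IsSynchronizing {A : Type*} (X : Set (ℤ → A)) (v : List A) : Prop :=
  ∀ u w : List A, (u ++ v) ∈ shiftLanguage X → (v ++ w) ∈ shiftLanguage X →
    (u ++ v ++ w) ∈ shiftLanguage X

private lemma len_flatten_replicate {A : Type*} (p : List A) :
    ∀ k : ℕ, (List.flatten (List.replicate k p)).length = k * p.length := by
  intro k
  induction k with
  | zero => simp
  | succ k ih => simp [List.replicate_succ, ih]; ring

private lemma getD_flatten_replicate {A : Type*} (p : List A) (d : A) :
    ∀ k j : ℕ, j < k * p.length →
      (List.flatten (List.replicate k p)).getD j d = p.getD (j % p.length) d := by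
  intro k
  induction k with
  | zero => intro j h; omega
  | succ k ih =>
    intro j h
    rw [List.replicate_succ, List.flatten_cons]
    by_cases hj : j < p.length
    · rw [List.getD_append _ _ _ _ hj, Nat.mod_eq_of_lt hj]
    · push_neg at hj
      have hexp : (k + 1) * p.length = k * p.length + p.length := by ring
      rw [List.getD_append_right _ _ _ _ hj, ih (j - p.length) (by omega),
        Nat.mod_eq_sub_mod hj]

private lemma shift_mem {A : Type*} {X : Set (ℤ → A)}
    (hinv : ∀ x, x ∈ X ↔ (fun n => x (n + 1)) ∈ X) (t : ℤ) :
    ∀ x ∈ X, (fun m : ℤ => x (m + t)) ∈ X := by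
  induction t using Int.induction_on with
  | zero => intro x hx; simpa using hx
  | succ i ih =>
    intro x hx
    have h := (hinv (fun m : ℤ => x (m + i))).mp (ih x hx)
    have he : (fun n : ℤ => (fun m : ℤ => x (m + i)) (n + 1))
        = (fun m : ℤ => x (m + (i + 1))) := by
      funext m; congr 1; ring
    rwa [he] at h
  | pred i ih =>
    intro x hx
    apply (hinv (fun m : ℤ => x (m + (-i - 1)))).mpr
    have he : (fun n : ℤ => (fun m : ℤ => x (m + (-i - 1))) (n + 1))
        = (fun m : ℤ => x (m + (-i : ℤ))) := by
      funext m; congr 1; ring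
    rw [he]
    exact ih x hx

/-- If `v` is synchronizing and `vwv ∈ 𝓛`, then the bi-infinite repetition of
`vw` is a point of `X`. -/
theorem synchronizing_periodic_point {A : Type*} [Inhabited A]
    [TopologicalSpace A] [DiscreteTopology A] [Finite A]
    (X : Set (ℤ → A)) (hX : IsClosed X)
    (hinv : ∀ x, x ∈ X ↔ (fun n => x (n + 1)) ∈ X)
    (v : List A) (hv : v ≠ []) (hsync : IsSynchronizing X v)
    (w : List A) (hw : v ++ w ++ v ∈ shiftLanguage X) :
    (fun n : ℤ => (v ++ w).getD (n % ((v ++ w).length : ℤ)).toNat default) ∈ X := by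
  classical
  set p : List A := v ++ w with hp
  set n : ℕ := p.length with hn
  have hnpos : 0 < n := by
    have : 0 < v.length := List.length_pos_iff.mpr hv
    simp [hn, hp]; omega
  set xper : ℤ → A := fun m : ℤ => p.getD (m % (n : ℤ)).toNat default with hxper
  -- Step 1: repetitions are in the language
  have hrep : ∀ k : ℕ, (List.flatten (List.replicate (k + 1) p) ++ v) ∈ shiftLanguage X := by
    intro k
    induction k with
    | zero => simpa using hw
    | succ k ih =>
      have h2 : (v ++ (w ++ v)) ∈ shiftLanguage X := by
        have hw' := hw
        rw [hp] at hw'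
        simpa [List.append_assoc] using hw'
      have h3 := hsync (List.flatten (List.replicate (k + 1) p)) (w ++ v) ih h2
      have he : List.flatten (List.replicate (k + 1) p) ++ v ++ (w ++ v)
          = List.flatten (List.replicate (k + 1 + 1) p) ++ v := by
        rw [show List.replicate (k + 1 + 1) p = List.replicate (k + 1) p ++ [p] from List.replicate_succ', List.flatten_append]
        simp [hp, List.append_assoc]
      rwa [he] at h3
  -- Step 2: for each N, a point of X agreeing with xper on [-N, N]
  have happrox : ∀ N : ℕ, ∃ y ∈ X, ∀ m : ℤ, m.natAbs ≤ N → y m = xper m := by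
    intro N
    obtain ⟨z, hz, i, hzi⟩ := hrep (2 * N + 1)
    refine ⟨fun m : ℤ => z (m + (i + (n : ℤ) * N)), shift_mem hinv _ z hz, ?_⟩
    intro m hm
    have hm1 : -(N : ℤ) ≤ m ∧ m ≤ N := by omega
    set W : List A := List.flatten (List.replicate (2 * N + 1 + 1) p) ++ v with hW
    have hWlen : W.length = (2 * N + 2) * n + v.length := by
      simp [hW, len_flatten_replicate]; rfl
    set jn : ℕ := (m + (n : ℤ) * N).toNat with hjn
    have hjn0 : (jn : ℤ) = m + (n : ℤ) * N := by
      have : 0 ≤ m + (n : ℤ) * N := by nlinarith [hm1.1, hnpos]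
      omega
    have hjlt : jn < (2 * N + 2) * n := by
      have : (jn : ℤ) < ((2 * N + 2) * n : ℕ) := by
        rw [hjn0]; push_cast; nlinarith [hm1.2, hnpos]
      exact_mod_cast this
    have hjW : jn < W.length := by omega
    have h1 : z (m + (i + (n : ℤ) * N)) = W.get ⟨jn, hjW⟩ := by
      rw [← hzi ⟨jn, hjW⟩]
      congr 1
      show m + (i + (n : ℤ) * N) = i + (jn : ℤ)
      rw [hjn0]; ring
    show z (m + (i + (n : ℤ) * N)) = xper m
    rw [h1, List.get_eq_getElem, ← List.getD_eq_getElem W default hjW]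
    have h2 : W.getD jn default = p.getD (jn % n) default := by
      rw [hW, List.getD_append _ _ _ _ (by rw [len_flatten_replicate]; exact hjlt)]
      exact getD_flatten_replicate p default _ jn hjlt
    rw [h2]
    have h3 : ((jn % n : ℕ) : ℤ) = m % (n : ℤ) := by
      push_cast
      rw [hjn0, Int.add_mul_emod_self_left]
    have h4 : ((m % (n : ℤ)).toNat : ℤ) = m % (n : ℤ) := by
      have := Int.emod_nonneg m (by exact_mod_cast hnpos.ne' : (n : ℤ) ≠ 0)
      omega
    have h5 : jn % n = (m % (n : ℤ)).toNat := by omega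
    rw [h5]
  -- Step 3: limit
  choose y hyX hyagree using happrox
  have htend : Filter.Tendsto y Filter.atTop (nhds xper) := by
    rw [tendsto_pi_nhds]
    intro m
    rw [show nhds (xper m) = pure (xper m) from nhds_discrete A ▸ rfl]
    rw [Filter.tendsto_pure]
    filter_upwards [Filter.eventually_ge_atTop m.natAbs] with N hN
    exact hyagree N m hN
  exact hX.mem_of_tendsto htend (Filter.Eventually.of_forall hyX)
end
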